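/- arXiv:1203.0861 — 2 statements merged into one kernel-verified Lean document; each statement's English description precedes it below -/
import Mathlib

section
/- Let d = d_1 d_2 with gcd(d_1, d_2) = 1. Under the Chinese remainder theorem maps m ↔ (m mod d_1, m mod d_2) and n ↔ (n·t_1 mod d_1, n·t_2 mod d_2) (where t_i·r_i ≡ 1 mod d_i, r_1 = d_2, r_2 = d_1), the line L(ν, μ) in Z(d) × Z(d) corresponds bijectively to the Cartesian product (in the sense of the combined coordinate map) of the lines L^(1)(ν_1, μ̄_1) ⊆ Z(d_1)×Z(d_1) and L^(2)(ν_2, μ̄_2) ⊆ Z(d_2)×Z(d_2). -/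
/-- The line through the origin in `Z(e) × Z(e)` generated by `(ν, μ)`. -/
def line (e : ℕ) (ν μ : ZMod e) : Set (ZMod e × ZMod e) :=
  {p | ∃ α : ZMod e, p = (ν * α, μ * α)}

lemma crt_pair_bij (d1 d2 : ℕ) (hco : Nat.Coprime d1 d2) :
    Function.Bijective (fun x : ZMod (d1 * d2) =>
      (ZMod.castHom (dvd_mul_right d1 d2) (ZMod d1) x,
       ZMod.castHom (dvd_mul_left d2 d1) (ZMod d2) x)) := by
  have h : (fun x : ZMod (d1 * d2) =>
      (ZMod.castHom (dvd_mul_right d1 d2) (ZMod d1) x,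
       ZMod.castHom (dvd_mul_left d2 d1) (ZMod d2) x)) = ⇑(ZMod.chineseRemainder hco) := by
    funext x
    ext
    · simp [ZMod.chineseRemainder, ZMod.castHom_apply, Prod.fst_zmod_cast]
    · simp [ZMod.chineseRemainder, ZMod.castHom_apply, Prod.snd_zmod_cast]
  rw [h]
  exact (ZMod.chineseRemainder hco).bijective

/-- Let `d = d₁d₂` with `d₁, d₂` coprime, and let `tᵢ` be the inverse of `rᵢ` mod `dᵢ`
(`r₁ = d₂`, `r₂ = d₁`).  The combined Chinese-remainder map
`(m, n) ↦ ((m mod d₁, t₁·(n mod d₁)), (m mod d₂, t₂·(n mod d₂)))` is a bijection from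
`Z(d) × Z(d)` onto `(Z(d₁) × Z(d₁)) × (Z(d₂) × Z(d₂))`, and under it the line
`L(ν, μ)` corresponds bijectively to the Cartesian product of the component lines
`L⁽¹⁾(ν₁, μ̄₁)` and `L⁽²⁾(ν₂, μ̄₂)`. -/
theorem line_crt_factorization (d1 d2 : ℕ) (h1 : 0 < d1) (h2 : 0 < d2)
    (hco : Nat.Coprime d1 d2)
    (t1 : ZMod d1) (t2 : ZMod d2)
    (ht1 : t1 * (d2 : ZMod d1) = 1) (ht2 : t2 * (d1 : ZMod d2) = 1) :
    Function.Bijective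
      (fun p : ZMod (d1 * d2) × ZMod (d1 * d2) =>
        ((ZMod.castHom (dvd_mul_right d1 d2) (ZMod d1) p.1,
          t1 * ZMod.castHom (dvd_mul_right d1 d2) (ZMod d1) p.2),
         (ZMod.castHom (dvd_mul_left d2 d1) (ZMod d2) p.1,
          t2 * ZMod.castHom (dvd_mul_left d2 d1) (ZMod d2) p.2))) ∧
    ∀ ν μ : ZMod (d1 * d2),
      (fun p : ZMod (d1 * d2) × ZMod (d1 * d2) =>
        ((ZMod.castHom (dvd_mul_right d1 d2) (ZMod d1) p.1,
          t1 * ZMod.castHom (dvd_mul_right d1 d2) (ZMod d1) p.2),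
         (ZMod.castHom (dvd_mul_left d2 d1) (ZMod d2) p.1,
          t2 * ZMod.castHom (dvd_mul_left d2 d1) (ZMod d2) p.2))) '' line (d1 * d2) ν μ
      = (line d1 (ZMod.castHom (dvd_mul_right d1 d2) (ZMod d1) ν)
              (t1 * ZMod.castHom (dvd_mul_right d1 d2) (ZMod d1) μ)) ×ˢ
        (line d2 (ZMod.castHom (dvd_mul_left d2 d1) (ZMod d2) ν)
              (t2 * ZMod.castHom (dvd_mul_left d2 d1) (ZMod d2) μ)) := by
  set F := ZMod.castHom (dvd_mul_right d1 d2) (ZMod d1) with hF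
  set G := ZMod.castHom (dvd_mul_left d2 d1) (ZMod d2) with hG
  have hbij := crt_pair_bij d1 d2 hco
  have hinj : ∀ x y : ZMod (d1 * d2), F x = F y → G x = G y → x = y := by
    intro x y hx hy
    exact hbij.1 (Prod.ext hx hy)
  have hsurj : ∀ (a : ZMod d1) (b : ZMod d2), ∃ x : ZMod (d1 * d2), F x = a ∧ G x = b := by
    intro a b
    obtain ⟨x, hx⟩ := hbij.2 (a, b)
    exact ⟨x, congrArg Prod.fst hx, congrArg Prod.snd hx⟩
  have hcanc1 : ∀ a b : ZMod d1, t1 * a = t1 * b → a = b := by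
    intro a b hab
    have : (d2 : ZMod d1) * (t1 * a) = (d2 : ZMod d1) * (t1 * b) := by rw [hab]
    calc a = (d2 : ZMod d1) * (t1 * a) := by rw [← mul_assoc, mul_comm (d2 : ZMod d1) t1, ht1, one_mul]
    _ = (d2 : ZMod d1) * (t1 * b) := this
    _ = b := by rw [← mul_assoc, mul_comm (d2 : ZMod d1) t1, ht1, one_mul]
  have hcanc2 : ∀ a b : ZMod d2, t2 * a = t2 * b → a = b := by
    intro a b hab
    have : (d1 : ZMod d2) * (t2 * a) = (d1 : ZMod d2) * (t2 * b) := by rw [hab]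
    calc a = (d1 : ZMod d2) * (t2 * a) := by rw [← mul_assoc, mul_comm (d1 : ZMod d2) t2, ht2, one_mul]
    _ = (d1 : ZMod d2) * (t2 * b) := this
    _ = b := by rw [← mul_assoc, mul_comm (d1 : ZMod d2) t2, ht2, one_mul]
  constructor
  · constructor
    · rintro ⟨m, n⟩ ⟨m', n'⟩ h
      simp only [Prod.mk.injEq] at h
      obtain ⟨⟨e11, e12⟩, e21, e22⟩ := h
      have hm : m = m' := hinj _ _ e11 e21
      have hn : n = n' := hinj _ _ (hcanc1 _ _ e12) (hcanc2 _ _ e22)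
      simp [hm, hn]
    · rintro ⟨⟨a1, b1⟩, a2, b2⟩
      obtain ⟨m, hm1, hm2⟩ := hsurj a1 a2
      obtain ⟨n, hn1, hn2⟩ := hsurj ((d2 : ZMod d1) * b1) ((d1 : ZMod d2) * b2)
      refine ⟨(m, n), ?_⟩
      simp only [Prod.mk.injEq]
      refine ⟨⟨hm1, ?_⟩, hm2, ?_⟩
      · rw [hn1, ← mul_assoc, ht1, one_mul]
      · rw [hn2, ← mul_assoc, ht2, one_mul]
  · intro ν μ
    ext ⟨⟨a1, b1⟩, a2, b2⟩
    simp only [Set.mem_image, Set.mem_prod, line, Set.mem_setOf_eq, Prod.mk.injEq]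
    constructor
    · rintro ⟨p, ⟨α, rfl⟩, h⟩
      simp only [map_mul, Prod.mk.injEq] at h
      obtain ⟨⟨rfl, rfl⟩, rfl, rfl⟩ := h
      exact ⟨⟨F α, ⟨rfl, (mul_assoc t1 (F μ) (F α)).symm⟩⟩,
             ⟨G α, ⟨rfl, (mul_assoc t2 (G μ) (G α)).symm⟩⟩⟩
    · rintro ⟨⟨β1, hβ1⟩, β2, hβ2⟩
      obtain ⟨α, hα1, hα2⟩ := hsurj β1 β2
      refine ⟨(ν * α, μ * α), ⟨α, rfl⟩, ?_⟩
      simp only [map_mul, hα1, hα2, Prod.mk.injEq]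
      obtain ⟨rfl, rfl⟩ := Prod.mk.injEq .. ▸ hβ1
      obtain ⟨rfl, rfl⟩ := Prod.mk.injEq .. ▸ hβ2
      refine ⟨⟨rfl, by ring⟩, rfl, by ring⟩
end

section
/- Let d = d_1 d_2 where d_1 < d_2 are distinct primes. Two maximal lines through the origin in Z(d) × Z(d) whose factorizations (via CRT) have the same second component line but different first component lines, intersect in exactly d_2 points. -/
/-- First CRT component of a subset of `Z(d₁d₂) × Z(d₁d₂)`:  the point `(m, n)` is sent
to `(m₁, n̄₁) = (m mod d₁, t₁·(n mod d₁))`. -/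
def comp1 (d1 d2 : ℕ) (t1 : ZMod d1) (L : Set (ZMod (d1 * d2) × ZMod (d1 * d2))) :
    Set (ZMod d1 × ZMod d1) :=
  (fun p : ZMod (d1 * d2) × ZMod (d1 * d2) =>
    (ZMod.castHom (dvd_mul_right d1 d2) (ZMod d1) p.1,
     t1 * ZMod.castHom (dvd_mul_right d1 d2) (ZMod d1) p.2)) '' L

/-- Second CRT component of a subset of `Z(d₁d₂) × Z(d₁d₂)`:  the point `(m, n)` is sent
to `(m₂, n̄₂) = (m mod d₂, t₂·(n mod d₂))`. -/
def comp2 (d1 d2 : ℕ) (t2 : ZMod d2) (L : Set (ZMod (d1 * d2) × ZMod (d1 * d2))) :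
    Set (ZMod d2 × ZMod d2) :=
  (fun p : ZMod (d1 * d2) × ZMod (d1 * d2) =>
    (ZMod.castHom (dvd_mul_left d2 d1) (ZMod d2) p.1,
     t2 * ZMod.castHom (dvd_mul_left d2 d1) (ZMod d2) p.2)) '' L

/-! ### Auxiliary lemmas -/

/-- ncard of a set product. -/
lemma ncard_prod_aux {α β : Type*} (s : Set α) (t : Set β) :
    (s ×ˢ t).ncard = s.ncard * t.ncard := by
  rw [← Nat.card_coe_set_eq, ← Nat.card_coe_set_eq, ← Nat.card_coe_set_eq,
    Nat.card_congr (Equiv.Set.prod s t), Nat.card_prod]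

lemma line_eq_range (e : ℕ) (ν μ : ZMod e) :
    line e ν μ = Set.range (fun α : ZMod e => (ν * α, μ * α)) := by
  ext p; simp [line, eq_comm, Set.range]

/-- scaling the generator by a unit does not change the line -/
lemma line_smul (e : ℕ) (ν μ a : ZMod e) (ha : IsUnit a) :
    line e (ν * a) (μ * a) = line e ν μ := by
  obtain ⟨u, rfl⟩ := ha
  ext p
  constructor
  · rintro ⟨b, rfl⟩; exact ⟨u * b, by ring_nf⟩
  · rintro ⟨b, rfl⟩; exact ⟨(u⁻¹ : (ZMod e)ˣ) * b, by
      refine Prod.ext ?_ ?_ <;> simp <;> ring_nf <;>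
        simp [mul_assoc, mul_comm, mul_left_comm]⟩

/-- zero is on every line -/
lemma zero_mem_line (e : ℕ) (ν μ : ZMod e) : (0, 0) ∈ line e ν μ :=
  ⟨0, by simp⟩

/-- in a prime field, two lines through the origin sharing a nonzero point coincide -/
lemma line_eq_of_mem {p : ℕ} (hp : p.Prime) (ν μ : ZMod p) (q : ZMod p × ZMod p)
    (hq : q ∈ line p ν μ) (hq0 : q ≠ (0, 0)) : line p ν μ = line p q.1 q.2 := by
  haveI : Fact p.Prime := ⟨hp⟩
  obtain ⟨a, rfl⟩ := hq
  have ha : a ≠ 0 := by rintro rfl; simp at hq0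
  exact (line_smul p ν μ a (isUnit_iff_ne_zero.mpr ha)).symm

/-- the image of a line under the component map is a line -/
lemma comp_line_eq {N n : ℕ} [NeZero n] (hd : n ∣ N) (t : ZMod n) (ν μ : ZMod N) :
    ((fun p : ZMod N × ZMod N =>
      (ZMod.castHom hd (ZMod n) p.1, t * ZMod.castHom hd (ZMod n) p.2)) '' line N ν μ)
    = line n (ZMod.castHom hd (ZMod n) ν) (t * ZMod.castHom hd (ZMod n) μ) := by
  ext q
  constructor
  · rintro ⟨p, ⟨α, rfl⟩, rfl⟩
    exact ⟨ZMod.castHom hd (ZMod n) α, by simp [map_mul]; ring_nf⟩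
  · rintro ⟨a, rfl⟩
    refine ⟨(ν * (a.val : ZMod N), μ * (a.val : ZMod N)), ⟨(a.val : ZMod N), rfl⟩, ?_⟩
    have h : ZMod.castHom hd (ZMod n) ((a.val : ℕ) : ZMod N) = a := by
      rw [map_natCast, ZMod.natCast_zmod_val]
    simp only [map_mul, h]
    exact Prod.ext rfl (by ring)

/-- the CRT equivalence is given componentwise by the cast homomorphisms -/
lemma crt_eq (d1 d2 : ℕ) (cop : Nat.Coprime d1 d2) (x : ZMod (d1 * d2)) :
    ZMod.chineseRemainder cop x =
      (ZMod.castHom (dvd_mul_right d1 d2) (ZMod d1) x,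
       ZMod.castHom (dvd_mul_left d2 d1) (ZMod d2) x) := by
  have : (ZMod.chineseRemainder cop x) = ZMod.cast x := rfl
  rw [this]
  exact Prod.ext (by simp [Prod.fst_zmod_cast]) (by simp [Prod.snd_zmod_cast])

lemma crt_inj (d1 d2 : ℕ) (cop : Nat.Coprime d1 d2) (x y : ZMod (d1 * d2))
    (hx1 : ZMod.castHom (dvd_mul_right d1 d2) (ZMod d1) x
         = ZMod.castHom (dvd_mul_right d1 d2) (ZMod d1) y)
    (hx2 : ZMod.castHom (dvd_mul_left d2 d1) (ZMod d2) x
         = ZMod.castHom (dvd_mul_left d2 d1) (ZMod d2) y) : x = y := by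
  apply (ZMod.chineseRemainder cop).injective
  rw [crt_eq d1 d2 cop, crt_eq d1 d2 cop, hx1, hx2]

lemma crt_surj (d1 d2 : ℕ) (cop : Nat.Coprime d1 d2) (a : ZMod d1) (b : ZMod d2) :
    ∃ x : ZMod (d1 * d2),
      ZMod.castHom (dvd_mul_right d1 d2) (ZMod d1) x = a ∧
      ZMod.castHom (dvd_mul_left d2 d1) (ZMod d2) x = b := by
  refine ⟨(ZMod.chineseRemainder cop).symm (a, b), ?_, ?_⟩
  · have := crt_eq d1 d2 cop ((ZMod.chineseRemainder cop).symm (a, b))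
    rw [(ZMod.chineseRemainder cop).apply_symm_apply] at this
    exact (congrArg Prod.fst this).symm
  · have := crt_eq d1 d2 cop ((ZMod.chineseRemainder cop).symm (a, b))
    rw [(ZMod.chineseRemainder cop).apply_symm_apply] at this
    exact (congrArg Prod.snd this).symm

/-- if a line in `ZMod (d1*d2)` is maximal, then its parametrization is injective -/
lemma param_inj_of_maximal (d1 d2 : ℕ) (hd : d1 * d2 ≠ 0) (ν μ : ZMod (d1 * d2))
    (hmax : (line (d1 * d2) ν μ).ncard = d1 * d2) :
    Function.Injective (fun α : ZMod (d1 * d2) => (ν * α, μ * α)) := by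
  haveI : NeZero (d1 * d2) := ⟨hd⟩
  have h2 : (Set.range (fun α : ZMod (d1 * d2) => (ν * α, μ * α))).ncard = d1 * d2 := by
    rw [← line_eq_range]; exact hmax
  rw [← Set.image_univ] at h2
  have huniv : (Set.univ : Set (ZMod (d1 * d2))).ncard = d1 * d2 := by
    rw [Set.ncard_univ, Nat.card_eq_fintype_card, ZMod.card]
  have := (Set.ncard_image_iff (Set.finite_univ)).mp (by rw [h2, huniv])
  intro a b hab
  exact this (Set.mem_univ a) (Set.mem_univ b) hab

/-- Let `d = d₁d₂` with `d₁ < d₂` primes.  Two maximal lines through the origin whose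
CRT factorizations have the same second component line but different first component
lines intersect in exactly `d₂` points. -/
theorem maximal_lines_same_second_component (d1 d2 : ℕ)
    (h1 : d1.Prime) (h2 : d2.Prime) (hlt : d1 < d2)
    (t1 : ZMod d1) (t2 : ZMod d2)
    (ht1 : t1 * (d2 : ZMod d1) = 1) (ht2 : t2 * (d1 : ZMod d2) = 1)
    (ν μ ν' μ' : ZMod (d1 * d2))
    (hmax : (line (d1 * d2) ν μ).ncard = d1 * d2)
    (hmax' : (line (d1 * d2) ν' μ').ncard = d1 * d2)
    (hsame : comp2 d1 d2 t2 (line (d1 * d2) ν μ) = comp2 d1 d2 t2 (line (d1 * d2) ν' μ'))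
    (hdiff : comp1 d1 d2 t1 (line (d1 * d2) ν μ) ≠ comp1 d1 d2 t1 (line (d1 * d2) ν' μ')) :
    (line (d1 * d2) ν μ ∩ line (d1 * d2) ν' μ').ncard = d2 := by
  haveI : NeZero d1 := ⟨h1.pos.ne'⟩
  haveI : NeZero d2 := ⟨h2.pos.ne'⟩
  have hd : d1 * d2 ≠ 0 := Nat.mul_ne_zero h1.pos.ne' h2.pos.ne'
  haveI : NeZero (d1 * d2) := ⟨hd⟩
  have cop : Nat.Coprime d1 d2 := (Nat.coprime_primes h1 h2).mpr hlt.ne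
  set c1 := ZMod.castHom (dvd_mul_right d1 d2) (ZMod d1) with hc1
  set c2 := ZMod.castHom (dvd_mul_left d2 d1) (ZMod d2) with hc2
  -- the CRT bijection on point pairs
  set φ : ZMod (d1 * d2) × ZMod (d1 * d2) → (ZMod d1 × ZMod d1) × (ZMod d2 × ZMod d2) :=
    fun p => ((c1 p.1, t1 * c1 p.2), (c2 p.1, t2 * c2 p.2)) with hφ
  have hu1 : IsUnit t1 := IsUnit.of_mul_eq_one _ ht1
  have hu2 : IsUnit t2 := IsUnit.of_mul_eq_one _ ht2
  have φinj : Function.Injective φ := by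
    intro p q hpq
    simp only [hφ, Prod.mk.injEq] at hpq
    obtain ⟨⟨e11, e12⟩, e21, e22⟩ := hpq
    exact Prod.ext (crt_inj d1 d2 cop _ _ e11 e21)
      (crt_inj d1 d2 cop _ _ (hu1.mul_left_cancel e12) (hu2.mul_left_cancel e22))
  -- image of a line under φ is the product of the two component lines
  have φline : ∀ a b : ZMod (d1 * d2),
      φ '' line (d1 * d2) a b
        = line d1 (c1 a) (t1 * c1 b) ×ˢ line d2 (c2 a) (t2 * c2 b) := by
    intro a b
    ext q
    constructor
    · rintro ⟨p, ⟨α, rfl⟩, rfl⟩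
      constructor
      · exact ⟨c1 α, by simp only [hφ, map_mul]; exact Prod.ext rfl (by ring)⟩
      · exact ⟨c2 α, by simp only [hφ, map_mul]; exact Prod.ext rfl (by ring)⟩
    · rintro ⟨⟨x, hx⟩, ⟨y, hy⟩⟩
      obtain ⟨α, hα1, hα2⟩ := crt_surj d1 d2 cop x y
      refine ⟨(a * α, b * α), ⟨α, rfl⟩, ?_⟩
      have : q = ((c1 a * x, t1 * c1 b * x), (c2 a * y, t2 * c2 b * y)) := by
        rw [Prod.ext_iff] at hx hy ⊢
        exact ⟨Prod.ext hx.1 (by rw [hx.2]), Prod.ext hy.1 (by rw [hy.2])⟩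
      rw [this]
      rw [← hc1] at hα1
      rw [← hc2] at hα2
      simp only [hφ, map_mul, hα1, hα2]
      refine Prod.ext (Prod.ext rfl (by ring)) (Prod.ext rfl (by ring))
  -- rewrite the component hypotheses via comp_line_eq
  rw [comp2, comp2, ← hc2, comp_line_eq, comp_line_eq] at hsame
  rw [comp1, comp1, ← hc1, comp_line_eq, comp_line_eq] at hdiff
  -- the first component lines intersect only at the origin
  have hfirst : line d1 (c1 ν) (t1 * c1 μ) ∩ line d1 (c1 ν') (t1 * c1 μ') = {(0, 0)} := by
    apply Set.eq_singleton_iff_unique_mem.mpr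
    refine ⟨⟨zero_mem_line _ _ _, zero_mem_line _ _ _⟩, ?_⟩
    rintro q ⟨hqa, hqb⟩
    by_contra hq0
    exact hdiff ((line_eq_of_mem h1 _ _ q hqa hq0).trans
      (line_eq_of_mem h1 _ _ q hqb hq0).symm)
  -- the second component line of the first line has d2 points
  have hinj : Function.Injective (fun α : ZMod (d1 * d2) => (ν * α, μ * α)) :=
    param_inj_of_maximal d1 d2 hd ν μ hmax
  have hginj : Function.Injective (fun a : ZMod d2 => (c2 ν * a, t2 * c2 μ * a)) := by
    intro a b hab
    simp only [Prod.mk.injEq] at hab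
    have hνab : c2 ν * (a - b) = 0 := by rw [mul_sub, sub_eq_zero]; exact hab.1
    have hμab : c2 μ * (a - b) = 0 := by
      rw [mul_sub, sub_eq_zero]
      exact hu2.mul_left_cancel (by rw [← mul_assoc, ← mul_assoc]; exact hab.2)
    obtain ⟨α, hα1, hα2⟩ := crt_surj d1 d2 cop 0 (a - b)
    rw [← hc1] at hα1
    rw [← hc2] at hα2
    have hν : ν * α = 0 := by
      apply crt_inj d1 d2 cop
      · rw [← hc1, map_mul, hα1, map_zero, mul_zero]
      · rw [← hc2, map_mul, hα2, map_zero]; exact hνab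
    have hμ : μ * α = 0 := by
      apply crt_inj d1 d2 cop
      · rw [← hc1, map_mul, hα1, map_zero, mul_zero]
      · rw [← hc2, map_mul, hα2, map_zero]; exact hμab
    have hα0 : α = 0 := hinj (by show (ν * α, μ * α) = (ν * 0, μ * 0); simp [hν, hμ])
    have : a - b = 0 := by rw [← hα2, hα0, map_zero]
    exact sub_eq_zero.mp this
  have hsecond : (line d2 (c2 ν) (t2 * c2 μ)).ncard = d2 := by
    rw [line_eq_range, ← Set.image_univ, Set.ncard_image_of_injective _ hginj,
      Set.ncard_univ, Nat.card_eq_fintype_card, ZMod.card]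
  -- put everything together
  have key : φ '' (line (d1 * d2) ν μ ∩ line (d1 * d2) ν' μ')
      = ({((0 : ZMod d1), (0 : ZMod d1))} : Set (ZMod d1 × ZMod d1))
          ×ˢ line d2 (c2 ν) (t2 * c2 μ) := by
    rw [Set.image_inter φinj, φline, φline, Set.prod_inter_prod, hfirst, ← hsame,
      Set.inter_self]
  calc (line (d1 * d2) ν μ ∩ line (d1 * d2) ν' μ').ncard
      = (φ '' (line (d1 * d2) ν μ ∩ line (d1 * d2) ν' μ')).ncard :=
        (Set.ncard_image_of_injective _ φinj).symm
    _ = d2 := by rw [key, ncard_prod_aux, Set.ncard_singleton, hsecond, one_mul]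
end
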